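/- Let T be a balanced tree with characteristic tuple (c_1, …, c_l), so level j has n_j vertices with n_0 = 1 and n_j = n_{j−1}·c_j. Define polynomials Q_0 = 1, Q_1 = x, Q_{j+2}(x) = x·Q_{j+1}(x) − c_{l−j}·Q_j(x) for 0 ≤ j ≤ l−1. Then the characteristic polynomial of the adjacency matrix of T equals ∏_{j=1}^{l+1} Q_j(x)^{n_{l+1−j} − n_{l−j}}, where n_{−1} = 0. -/

import Mathlib

open Polynomial Matrix Finset

namespace BalancedTreeAux

variable {K : Type*} [Field K]

abbrev Idx (n : ℕ → ℕ) (m : ℕ) := (j : Fin (m + 1)) × Fin (n j.1)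

/-- The (shifted) characteristic matrix of the balanced tree up to level `m`,
with diagonal entry `d` at level `m` and `x` at lower levels. -/
def Tm (n c : ℕ → ℕ) (x d : K) (m : ℕ) : Matrix (Idx n m) (Idx n m) K :=
  fun v w =>
    if v.1.1 = w.1.1 ∧ v.2.1 = w.2.1 then (if v.1.1 = m then d else x)
    else if (v.1.1 = w.1.1 + 1 ∧ v.2.1 / c v.1.1 = w.2.1) ∨
            (w.1.1 = v.1.1 + 1 ∧ w.2.1 / c w.1.1 = v.2.1) then -1 else 0

lemma idx_eq_iff {n : ℕ → ℕ} {m : ℕ} (v w : Idx n m) :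
    v = w ↔ v.1.1 = w.1.1 ∧ v.2.1 = w.2.1 := by
  constructor
  · rintro rfl; exact ⟨rfl, rfl⟩
  · obtain ⟨⟨a, ha⟩, i⟩ := v
    obtain ⟨⟨b, hb⟩, i'⟩ := w
    rintro ⟨h1, h2⟩
    dsimp at h1 h2
    subst h1
    exact Sigma.ext rfl (heq_of_eq (Fin.ext h2))

def idxEquiv (n : ℕ → ℕ) (m : ℕ) : (Idx n m ⊕ Fin (n (m + 1))) ≃ Idx n (m + 1) where
  toFun := Sum.elim (fun q => ⟨⟨q.1.1, Nat.lt_succ_of_lt q.1.2⟩, q.2⟩)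
    (fun i => ⟨⟨m + 1, Nat.lt_succ_self _⟩, i⟩)
  invFun p := if h : p.1.1 < m + 1 then Sum.inl ⟨⟨p.1.1, h⟩, p.2⟩
    else Sum.inr (Fin.cast (congrArg n (by have := p.1.2; omega)) p.2)
  left_inv := by
    rintro (⟨⟨j, hj⟩, i⟩ | i)
    · simp [hj]
    · simp
  right_inv := by
    rintro ⟨⟨j, hj⟩, i⟩
    dsimp only
    by_cases h : j < m + 1
    · rw [dif_pos h]
      rfl
    · rw [dif_neg h]
      have hj' : j = m + 1 := by omega
      subst hj'
      rfl


lemma count_sum (N cc i : ℕ) (hcc : 1 ≤ cc) (hi : i < N) :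
    (∑ a ∈ Finset.range (N * cc), if a / cc = i then (1 : K) else 0) = (cc : K) := by
  have hcc' : 0 < cc := hcc
  have key : (Finset.range (N * cc)).filter (fun a => a / cc = i)
      = Finset.Ico (i * cc) (i * cc + cc) := by
    ext a
    simp only [Finset.mem_filter, Finset.mem_range, Finset.mem_Ico]
    have h2 : a / cc = i ↔ i * cc ≤ a ∧ a < (i + 1) * cc := by
      constructor
      · rintro rfl
        exact ⟨Nat.div_mul_le_self a cc, (Nat.div_lt_iff_lt_mul hcc').1 (Nat.lt_succ_self _)⟩
      · rintro ⟨h1, h2⟩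
        have ha := (Nat.le_div_iff_mul_le hcc').2 h1
        have hb := (Nat.div_lt_iff_lt_mul hcc').2 h2
        omega
    have h3 : (i + 1) * cc ≤ N * cc := Nat.mul_le_mul_right cc hi
    have hexp : (i + 1) * cc = i * cc + cc := by ring
    constructor
    · rintro ⟨_, hdiv⟩
      have := h2.1 hdiv
      omega
    · rintro ⟨hle, hlt⟩
      have : a / cc = i := h2.2 ⟨hle, by omega⟩
      exact ⟨by omega, this⟩
  rw [← Finset.sum_filter, key]
  simp

lemma base_det (n c : ℕ → ℕ) (x d : K) (hn0 : n 0 = 1) :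
    (Tm n c x d 0).det = d := by
  have e : Fin 1 ≃ Idx n 0 :=
    { toFun := fun _ => ⟨⟨0, Nat.one_pos⟩, ⟨0, by simpa [hn0] using Nat.one_pos⟩⟩
      invFun := fun _ => 0
      left_inv := fun t => Subsingleton.elim _ _
      right_inv := by
        rintro ⟨⟨j, hj⟩, i⟩
        have hj' : j = 0 := by omega
        subst hj'
        have hi : (i : ℕ) < 1 := by simpa [hn0] using i.2
        dsimp only
        exact Sigma.ext rfl (heq_of_eq (Fin.ext (by simp; omega)))
      }
  rw [← Matrix.det_submatrix_equiv_self e, Matrix.det_fin_one]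
  simp [Tm]

lemma step_det (n c : ℕ → ℕ) (x : K) (m : ℕ) (d : K) (hd : d ≠ 0)
    (hnm : n (m + 1) = n m * c (m + 1)) (hc1 : 1 ≤ c (m + 1)) :
    (Tm n c x d (m + 1)).det
      = d ^ (n (m + 1)) * (Tm n c x (x - (c (m + 1) : K) / d) m).det := by
  classical
  set A11 : Matrix (Idx n m) (Idx n m) K := Tm n c x x m with hA11def
  set B : Matrix (Idx n m) (Fin (n (m + 1))) K :=
    fun v i => if v.1.1 = m ∧ i.1 / c (m + 1) = v.2.1 then -1 else 0 with hBdef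
  set Ct : Matrix (Fin (n (m + 1))) (Idx n m) K :=
    fun i v => if v.1.1 = m ∧ i.1 / c (m + 1) = v.2.1 then -1 else 0 with hCtdef
  set D : Matrix (Fin (n (m + 1))) (Fin (n (m + 1))) K := d • 1 with hDdef
  have hsub : (Tm n c x d (m + 1)).submatrix (idxEquiv n m) (idxEquiv n m)
      = Matrix.fromBlocks A11 B Ct D := by
    ext v w
    rcases v with v | i <;> rcases w with w | i' <;>
      simp only [Matrix.submatrix_apply, Matrix.fromBlocks_apply₁₁,
        Matrix.fromBlocks_apply₁₂, Matrix.fromBlocks_apply₂₁, Matrix.fromBlocks_apply₂₂,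
        idxEquiv, Equiv.coe_fn_mk, Sum.elim_inl, Sum.elim_inr]
    · -- block (1,1)
      show Tm n c x d (m+1) ⟨⟨v.1.1, _⟩, v.2⟩ ⟨⟨w.1.1, _⟩, w.2⟩ = A11 v w
      have hv : v.1.1 < m + 1 := v.1.2
      simp only [Tm, hA11def]
      rw [if_neg (by omega : ¬ v.1.1 = m + 1), ite_self]
    · -- block (1,2)
      show Tm n c x d (m+1) ⟨⟨v.1.1, _⟩, v.2⟩ ⟨⟨m+1, _⟩, i'⟩ = B v i'
      have hv : v.1.1 < m + 1 := v.1.2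
      simp only [Tm, hBdef]
      rw [if_neg (by omega : ¬ (v.1.1 = m + 1 ∧ v.2.1 = i'.1))]
      have hiff : ((v.1.1 = (m+1) + 1 ∧ v.2.1 / c v.1.1 = i'.1) ∨
          (m + 1 = v.1.1 + 1 ∧ i'.1 / c (m+1) = v.2.1))
          ↔ (v.1.1 = m ∧ i'.1 / c (m+1) = v.2.1) := by
        constructor
        · rintro (⟨h, -⟩ | ⟨h, hq⟩)
          · omega
          · exact ⟨by omega, hq⟩
        · rintro ⟨h, hq⟩
          exact Or.inr ⟨by omega, hq⟩
      simp only [hiff]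
    · -- block (2,1)
      show Tm n c x d (m+1) ⟨⟨m+1, _⟩, i⟩ ⟨⟨w.1.1, _⟩, w.2⟩ = Ct i w
      have hw : w.1.1 < m + 1 := w.1.2
      simp only [Tm, hCtdef]
      rw [if_neg (by omega : ¬ ((m+1 : ℕ) = w.1.1 ∧ i.1 = w.2.1))]
      have hiff : ((m + 1 = w.1.1 + 1 ∧ i.1 / c (m+1) = w.2.1) ∨
          (w.1.1 = (m+1) + 1 ∧ w.2.1 / c w.1.1 = i.1))
          ↔ (w.1.1 = m ∧ i.1 / c (m+1) = w.2.1) := by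
        constructor
        · rintro (⟨h, hq⟩ | ⟨h, -⟩)
          · exact ⟨by omega, hq⟩
          · omega
        · rintro ⟨h, hq⟩
          exact Or.inl ⟨by omega, hq⟩
      simp only [hiff]
    · -- block (2,2)
      show Tm n c x d (m+1) ⟨⟨m+1, _⟩, i⟩ ⟨⟨m+1, _⟩, i'⟩ = D i i'
      simp only [Tm, hDdef, Matrix.smul_apply, Matrix.one_apply, smul_eq_mul]
      have hne : ¬ ((m+1 : ℕ) = (m+1) + 1 ∧ i.1 / c (m+1) = i'.1) := by omega
      have hne' : ¬ ((m+1 : ℕ) = (m+1) + 1 ∧ i'.1 / c (m+1) = i.1) := by omega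
      by_cases h : i = i'
      · subst h
        simp
      · rw [if_neg (fun hh => h (Fin.ext hh.2)), if_neg (by tauto), if_neg h, mul_zero]
  rw [← Matrix.det_submatrix_equiv_self (idxEquiv n m), hsub]
  letI : Invertible D := ⟨d⁻¹ • (1 : Matrix (Fin (n (m+1))) (Fin (n (m+1))) K),
    by simp [hDdef, Matrix.smul_mul, Matrix.mul_smul, smul_smul, inv_mul_cancel₀ hd,
      mul_inv_cancel₀ hd],
    by simp [hDdef, Matrix.smul_mul, Matrix.mul_smul, smul_smul, inv_mul_cancel₀ hd,
      mul_inv_cancel₀ hd]⟩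
  rw [Matrix.det_fromBlocks₂₂]
  have hDdet : D.det = d ^ (n (m + 1)) := by
    simp [hDdef, Matrix.det_smul, Fintype.card_fin]
  have hinv : (⅟D : Matrix (Fin (n (m+1))) (Fin (n (m+1))) K) = d⁻¹ • 1 := rfl
  have hBC : B * Ct = Matrix.of (fun v w : Idx n m =>
      if v.1.1 = m ∧ w.1.1 = m ∧ v.2.1 = w.2.1 then (c (m + 1) : K) else 0) := by
    ext v w
    rw [Matrix.mul_apply, Matrix.of_apply]
    by_cases hv : v.1.1 = m
    · by_cases hw : w.1.1 = m
      · by_cases hvw : v.2.1 = w.2.1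
        · rw [if_pos ⟨hv, hw, hvw⟩]
          have hvN : v.2.1 < n m := by
            have h := v.2.2
            have h2 := congrArg n hv
            omega
          calc ∑ i, B v i * Ct i w
              = ∑ i : Fin (n (m+1)), (if i.1 / c (m + 1) = v.2.1 then (1:K) else 0) := by
                apply Finset.sum_congr rfl
                intro i _
                simp only [hBdef, hCtdef]
                by_cases h : i.1 / c (m+1) = v.2.1
                · rw [if_pos ⟨hv, h⟩, if_pos ⟨hw, hvw ▸ h⟩, if_pos h]; norm_num
                · rw [if_neg (fun hh => h hh.2), if_neg h, zero_mul]
            _ = (c (m+1) : K) := by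
                rw [Fin.sum_univ_eq_sum_range
                  (fun a => if a / c (m + 1) = v.2.1 then (1:K) else 0) (n (m+1)), hnm]
                exact count_sum _ _ _ hc1 hvN
        · rw [if_neg (by tauto)]
          apply Finset.sum_eq_zero
          intro i _
          simp only [hBdef, hCtdef]
          by_cases h1 : v.1.1 = m ∧ i.1 / c (m+1) = v.2.1
          · rw [if_neg (fun hh : w.1.1 = m ∧ i.1 / c (m+1) = w.2.1 =>
              hvw (h1.2.symm.trans hh.2)), mul_zero]
          · rw [if_neg h1, zero_mul]
      · rw [if_neg (by tauto)]
        apply Finset.sum_eq_zero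
        intro i _
        simp only [hCtdef]
        rw [if_neg (fun hh => hw hh.1), mul_zero]
    · rw [if_neg (by tauto)]
      apply Finset.sum_eq_zero
      intro i _
      simp only [hBdef]
      rw [if_neg (fun hh => hv hh.1), zero_mul]
  rw [hDdet, hinv]
  congr 1
  have hschur : A11 - B * ((d⁻¹ • 1 : Matrix (Fin (n (m+1))) (Fin (n (m+1))) K)) * Ct
      = Tm n c x (x - (c (m + 1) : K) / d) m := by
    rw [Matrix.mul_smul, Matrix.mul_one, Matrix.smul_mul, hBC]
    ext v w
    simp only [Matrix.sub_apply, Matrix.smul_apply, Matrix.of_apply, smul_eq_mul, hA11def, Tm]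
    by_cases h1 : v.1.1 = w.1.1 ∧ v.2.1 = w.2.1
    · rw [if_pos h1, if_pos h1, ite_self]
      by_cases h2 : v.1.1 = m
      · rw [if_pos ⟨h2, h1.1 ▸ h2, h1.2⟩, if_pos h2, div_eq_mul_inv]
        ring
      · rw [if_neg (fun hh => h2 hh.1), if_neg h2, mul_zero, sub_zero]
    · rw [if_neg h1, if_neg h1,
        if_neg (fun hh : v.1.1 = m ∧ w.1.1 = m ∧ v.2.1 = w.2.1 =>
          h1 ⟨hh.1.trans hh.2.1.symm, hh.2.2⟩), mul_zero, sub_zero]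
  rw [hschur]

lemma main_det (n c : ℕ → ℕ) (x : K) (q : ℕ → K) (l : ℕ) (hl : 1 ≤ l)
    (hn0 : n 0 = 1) (hn : ∀ j : ℕ, j + 1 ≤ l → n (j + 1) = n j * c (j + 1))
    (hc : ∀ j : ℕ, 1 ≤ j → j ≤ l → 1 ≤ c j)
    (hq : ∀ j : ℕ, j ≤ l + 1 → q j ≠ 0)
    (hrec : ∀ j : ℕ, j ≤ l - 1 → q (j + 2) = x * q (j + 1) - (c (l - j) : K) * q j) :
    ∀ m : ℕ, m ≤ l → q (l - m) ^ (n m) * (Tm n c x (q (l + 1 - m) / q (l - m)) m).det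
      = ∏ j ∈ Finset.Icc (l + 1 - m) (l + 1),
          q j ^ (n (l + 1 - j) - (if j = l + 1 then 0 else n (l - j))) := by
  intro m
  induction m with
  | zero =>
    intro _
    rw [base_det n c x _ hn0]
    rw [Nat.sub_zero, Nat.sub_zero, hn0, pow_one]
    rw [mul_div_cancel₀ _ (hq l (by omega))]
    rw [Finset.Icc_self, Finset.prod_singleton, if_pos rfl]
    have h1 : l + 1 - (l + 1) = 0 := by omega
    rw [h1, hn0, Nat.sub_zero, pow_one]
  | succ m ih =>
    intro hm
    have hml : m ≤ l := by omega
    -- useful nonvanishing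
    have hqa : q (l - m) ≠ 0 := hq _ (by omega)
    have hqb : q (l - (m + 1)) ≠ 0 := hq _ (by omega)
    have hr' : q (l - m) / q (l - (m + 1)) ≠ 0 := div_ne_zero hqa hqb
    have e0 : l + 1 - (m + 1) = l - m := by omega
    rw [e0]
    have hstep := step_det n c x m (q (l - m) / q (l - (m + 1))) hr' (hn m hm)
      (hc (m + 1) (by omega) hm)
    have h2 : x - (c (m + 1) : K) / (q (l - m) / q (l - (m + 1))) =
        q (l + 1 - m) / q (l - m) := by
      have hr := hrec (l - m - 1) (by omega)
      have e1 : l - m - 1 + 2 = l + 1 - m := by omega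
      have e2 : l - m - 1 + 1 = l - m := by omega
      have e3 : l - (l - m - 1) = m + 1 := by omega
      have e4 : l - m - 1 = l - (m + 1) := by omega
      rw [e1, e2, e3, e4] at hr
      field_simp
      rw [hr]
      try ring
    rw [h2] at hstep
    rw [hstep]
    have hmono : n m ≤ n (m + 1) := by
      rw [hn m hm]
      exact Nat.le_mul_of_pos_right (n m) (hc (m + 1) (by omega) hm)
    have hcollapse : q (l - (m + 1)) ^ n (m + 1) * ((q (l - m) / q (l - (m + 1))) ^ n (m + 1)
        * (Tm n c x (q (l + 1 - m) / q (l - m)) m).det)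
        = q (l - m) ^ (n (m + 1) - n m)
          * (q (l - m) ^ n m * (Tm n c x (q (l + 1 - m) / q (l - m)) m).det) := by
      rw [← mul_assoc, ← mul_pow, mul_div_cancel₀ _ hqb, ← mul_assoc, ← pow_add,
        Nat.sub_add_cancel hmono]
    rw [hcollapse, ih hml]
    -- now handle the product
    have hsplit : Finset.Icc (l - m) (l + 1) = insert (l - m) (Finset.Icc (l + 1 - m) (l + 1)) := by
      ext a
      simp only [Finset.mem_Icc, Finset.mem_insert]
      omega
    rw [hsplit, Finset.prod_insert (by simp only [Finset.mem_Icc]; omega)]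
    congr 1
    have hne : ¬ (l - m = l + 1) := by omega
    rw [if_neg hne]
    have e5 : l + 1 - (l - m) = m + 1 := by omega
    have e6 : l - (l - m) = m := by omega
    rw [e5, e6]

lemma q_monic (l : ℕ) (hl : 1 ≤ l) (c : ℕ → ℕ) (Q : ℕ → Polynomial ℝ)
    (hQ0 : Q 0 = 1) (hQ1 : Q 1 = Polynomial.X)
    (hQ : ∀ j : ℕ, j ≤ l - 1 →
      Q (j + 2) = Polynomial.X * Q (j + 1) - Polynomial.C ((c (l - j) : ℝ)) * Q j) :
    ∀ j : ℕ, j ≤ l + 1 → (Q j).Monic ∧ (Q j).natDegree = j := by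
  intro j
  induction j using Nat.strong_induction_on with
  | _ j ih =>
    match j with
    | 0 => intro _; exact ⟨hQ0 ▸ monic_one, by simp [hQ0]⟩
    | 1 => intro _; exact ⟨hQ1 ▸ monic_X, by simp [hQ1]⟩
    | (j+2) =>
      intro hj
      obtain ⟨m1, d1⟩ := ih (j+1) (by omega) (by omega)
      obtain ⟨m0, d0⟩ := ih j (by omega) (by omega)
      have hrec := hQ j (by omega)
      have hm : (Polynomial.X * Q (j+1)).Monic := monic_X.mul m1
      have hdeg : (Polynomial.X * Q (j+1)).natDegree = j + 2 := by
        rw [natDegree_mul X_ne_zero m1.ne_zero, natDegree_X]; omega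
      have hlt : (Polynomial.C ((c (l-j) : ℝ)) * Q j).natDegree
          < (Polynomial.X * Q (j+1)).natDegree := by
        have h := natDegree_C_mul_le ((c (l-j) : ℝ)) (Q j)
        omega
      refine ⟨?_, ?_⟩
      · rw [hrec]
        exact hm.sub_of_left (degree_lt_degree hlt)
      · rw [hrec, natDegree_sub_eq_left_of_natDegree_lt hlt, hdeg]

end BalancedTreeAux

open BalancedTreeAux

theorem balanced_tree_charpoly (l : ℕ) (hl : 1 ≤ l)
    (c : ℕ → ℕ) (hc : ∀ j : ℕ, 1 ≤ j → j ≤ l → 1 ≤ c j)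
    (n : ℕ → ℕ) (hn0 : n 0 = 1) (hn : ∀ j : ℕ, j + 1 ≤ l → n (j + 1) = n j * c (j + 1))
    (Q : ℕ → Polynomial ℝ) (hQ0 : Q 0 = 1) (hQ1 : Q 1 = Polynomial.X)
    (hQ : ∀ j : ℕ, j ≤ l - 1 →
      Q (j + 2) = Polynomial.X * Q (j + 1) - Polynomial.C ((c (l - j) : ℝ)) * Q j)
    (A : Matrix ((j : Fin (l + 1)) × Fin (n j.1)) ((j : Fin (l + 1)) × Fin (n j.1)) ℝ)
    (hA : ∀ v w : (j : Fin (l + 1)) × Fin (n j.1),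
      A v w = if (v.1.1 = w.1.1 + 1 ∧ v.2.1 / c v.1.1 = w.2.1) ∨
                 (w.1.1 = v.1.1 + 1 ∧ w.2.1 / c w.1.1 = v.2.1) then 1 else 0) :
    A.charpoly = ∏ j ∈ Finset.Icc 1 (l + 1),
      Q j ^ (n (l + 1 - j) - (if j = l + 1 then 0 else n (l - j))) := by
  classical
  set φ := algebraMap (Polynomial ℝ) (RatFunc ℝ) with hφ
  set x : RatFunc ℝ := φ Polynomial.X with hxdef
  set q : ℕ → RatFunc ℝ := fun j => φ (Q j) with hqdef
  have hmon := q_monic l hl c Q hQ0 hQ1 hQ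
  have hqne : ∀ j : ℕ, j ≤ l + 1 → q j ≠ 0 := fun j hj =>
    RatFunc.algebraMap_ne_zero ((hmon j hj).1.ne_zero)
  have hq0 : q 0 = 1 := by simp [hqdef, hQ0]
  have hq1 : q 1 = x := by simp [hqdef, hQ1, hxdef]
  have hrec : ∀ j : ℕ, j ≤ l - 1 →
      q (j + 2) = x * q (j + 1) - (c (l - j) : RatFunc ℝ) * q j := by
    intro j hj
    simp only [hqdef]
    rw [hQ j hj]
    simp only [map_sub, _root_.map_mul, Polynomial.C_eq_natCast, map_natCast]
    rw [hxdef]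
  have hmain := main_det n c x q l hl hn0 hn hc hqne hrec l le_rfl
  have e1 : l - l = 0 := by omega
  have e2 : l + 1 - l = 1 := by omega
  rw [e1, e2, hq0, hq1, one_pow, one_mul, div_one] at hmain
  have hchar : (charmatrix A).map φ = Tm n c x x l := by
    ext v w
    rw [Matrix.map_apply]
    by_cases hvw : v = w
    · subst hvw
      rw [charmatrix_apply_eq]
      have hAvv : A v v = 0 := by
        rw [hA v v, if_neg]
        rintro (⟨h, -⟩ | ⟨h, -⟩) <;> omega
      have hT : Tm n c x x l v v = x := by
        simp [Tm]
      rw [hT, hAvv]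
      simp [hxdef]
    · rw [charmatrix_apply_ne _ _ _ hvw, hA v w]
      have hvw' : ¬ (v.1.1 = w.1.1 ∧ v.2.1 = w.2.1) := fun h => hvw ((idx_eq_iff v w).2 h)
      simp only [Tm]
      rw [if_neg hvw']
      by_cases hadj : (v.1.1 = w.1.1 + 1 ∧ v.2.1 / c v.1.1 = w.2.1) ∨
          (w.1.1 = v.1.1 + 1 ∧ w.2.1 / c w.1.1 = v.2.1)
      · rw [if_pos hadj, if_pos hadj]; simp
      · rw [if_neg hadj, if_neg hadj]; simp
  have hdet : φ A.charpoly = (Tm n c x x l).det := by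
    have h0 : A.charpoly = (charmatrix A).det := rfl
    rw [h0, RingHom.map_det, RingHom.mapMatrix_apply, hchar]
  apply RatFunc.algebraMap_injective (K := ℝ)
  rw [← hφ]
  rw [hdet, hmain, map_prod]
  apply Finset.prod_congr rfl
  intro j _
  rw [map_pow]
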